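/- Let e_1, …, e_d be the standard basis of ℂ^d and define A₁ = e₁e₁ᵀ, A_j = e₁e_jᵀ + e_j e₁ᵀ and A_{d−1+j} = i e₁e_jᵀ − i e_j e₁ᵀ for j = 2, …, d. Suppose v, u ∈ ℂ^d satisfy Re(v* A_j u) = 0 for all j = 1, …, 2d−1, with v₁ ≠ 0 and u₁ ≠ 0. Then u = i c v for some real number c. -/

import Mathlib

theorem stmt_12 (d : ℕ) (hd : 0 < d) (v u : Fin d → ℂ)
    (h1 : ((starRingEnd ℂ) (v ⟨0, hd⟩) * u ⟨0, hd⟩).re = 0)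
    (h2 : ∀ k : Fin d, k ≠ ⟨0, hd⟩ →
      ((starRingEnd ℂ) (v ⟨0, hd⟩) * u k + (starRingEnd ℂ) (v k) * u ⟨0, hd⟩).re = 0)
    (h3 : ∀ k : Fin d, k ≠ ⟨0, hd⟩ →
      (Complex.I * (starRingEnd ℂ) (v ⟨0, hd⟩) * u k
        - Complex.I * (starRingEnd ℂ) (v k) * u ⟨0, hd⟩).re = 0)
    (hv : v ⟨0, hd⟩ ≠ 0) (hu : u ⟨0, hd⟩ ≠ 0) :
    ∃ c : ℝ, u = (Complex.I * (c : ℂ)) • v := by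
  set z : Fin d := ⟨0, hd⟩ with hz
  set a : ℂ := v z with ha
  set b : ℂ := u z with hb
  set c : ℝ := ((starRingEnd ℂ) a * b).im / Complex.normSq a with hc
  have hns : Complex.normSq a ≠ 0 := by
    simpa [Complex.normSq_eq_zero] using hv
  have hca : (starRingEnd ℂ) a ≠ 0 := by
    simpa using hv
  have key : (starRingEnd ℂ) a * b = Complex.I * (((starRingEnd ℂ) a * b).im : ℂ) := by
    apply Complex.ext <;> simp [h1]
  have h0 : b = Complex.I * (c : ℂ) * a := by
    apply mul_left_cancel₀ hca
    have h4 : (starRingEnd ℂ) a * (Complex.I * (c : ℂ) * a)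
        = Complex.I * ((c * Complex.normSq a : ℝ) : ℂ) := by
      push_cast
      rw [show (starRingEnd ℂ) a * (Complex.I * (c : ℂ) * a)
        = Complex.I * (c : ℂ) * ((starRingEnd ℂ) a * a) by ring, Complex.conj_mul']
      simp [Complex.normSq_eq_norm_sq]
      push_cast
      ring
    rw [h4, hc, div_mul_cancel₀ _ hns, ← key]
  refine ⟨c, funext fun k => ?_⟩
  by_cases hk : k = z
  · subst hk; simpa using h0
  · have e2 := h2 k hk
    have e3 := h3 k hk
    have hzk : (starRingEnd ℂ) a * u k = - (starRingEnd ℂ) ((starRingEnd ℂ) (v k) * b) := by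
      apply Complex.ext
      · simp only [Complex.neg_re, Complex.conj_re, Complex.add_re] at e2 ⊢
        linarith
      · simp only [Complex.neg_im, Complex.conj_im, Complex.sub_re, Complex.mul_re,
          Complex.I_re, Complex.I_im, Complex.mul_im] at e3 ⊢
        nlinarith [e3]
    apply mul_left_cancel₀ hca
    rw [hzk, h0]
    simp only [map_mul, Complex.conj_conj, Complex.conj_I, Complex.conj_ofReal,
      Pi.smul_apply, smul_eq_mul]
    ring
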